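/- arXiv:math/9903096 — 4 statements merged into one kernel-verified Lean document; each statement's English description precedes it below -/
import Mathlib

section
/- The diagonal ℤ_N-action σ(Λ′,Λ″,Λ) = (σ₁Λ′, σ₁Λ″, σ₁Λ) preserves the exponent set: if τ(Λ′) + τ(Λ″) − τ(Λ) ≡ 0 (mod N), then τ(σ₁Λ′) + τ(σ₁Λ″) − τ(σ₁Λ) ≡ 0 (mod N). -/
/-- The set `P_{++}^{(h)}` of shifted integrable weights of affine `sl(N)` at level
`k = h - N`. -/
def Ppp (N h : ℕ) : Set (Fin (N - 1) → ℤ) :=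
  {l | (∀ i, 1 ≤ l i) ∧ ∑ i, l i ≤ (h : ℤ) - 1}

/-- The diagram automorphism `σ₁(λ) = (h - Σⱼ λⱼ, λ₁, …, λ_{N-2})`. -/
def sigma1 (N h : ℕ) (l : Fin (N - 1) → ℤ) : Fin (N - 1) → ℤ :=
  fun i =>
    if (i : ℕ) = 0 then (h : ℤ) - ∑ j, l j
    else l ⟨(i : ℕ) - 1, Nat.lt_of_le_of_lt (Nat.sub_le _ _) i.isLt⟩

/-- The color `τ(λ) = Σ_{i=1}^{N-1} i·(λ_i - 1)`. -/
def color (N : ℕ) (l : Fin (N - 1) → ℤ) : ℤ :=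
  ∑ i : Fin (N - 1), (((i : ℕ) : ℤ) + 1) * (l i - 1)

/-- Key computation: `τ(σ₁λ) = τ(λ) + h - N·λ_{N-1}` (for `N = m + 2`). -/
lemma color_sigma1 (m h : ℕ) (l : Fin (m + 1) → ℤ) :
    color (m + 2) (sigma1 (m + 2) h l)
      = color (m + 2) l + h - ((m : ℤ) + 2) * l (Fin.last m) := by
  have key : (∑ i : Fin (m+1), (((i:ℕ):ℤ)+1) * (sigma1 (m+2) h l i - 1))
      = (∑ i : Fin (m+1), (((i:ℕ):ℤ)+1) * (l i - 1)) + h - ((m : ℤ) + 2) * l (Fin.last m) := by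
    rw [Fin.sum_univ_succ, Fin.sum_univ_castSucc (f := fun i : Fin (m+1) => (((i:ℕ):ℤ)+1) * (l i - 1))]
    have h0 : sigma1 (m+2) h l (0 : Fin (m+1)) = (h : ℤ) - ∑ j : Fin (m+1), l j := rfl
    have hs : ∀ i : Fin m, sigma1 (m+2) h l i.succ = l i.castSucc := by
      intro i; rfl
    rw [h0]
    simp only [hs, Fin.val_succ, Fin.val_zero, Fin.coe_castSucc, Fin.val_last]
    have h1 : (Finset.univ.sum fun i : Fin m => ((((i:ℕ)+1:ℕ):ℤ)+1) * (l i.castSucc - 1))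
        = (Finset.univ.sum fun i : Fin m => (((i:ℕ):ℤ)+1) * (l i.castSucc - 1))
          + ((Finset.univ.sum fun i : Fin m => l i.castSucc) - m) := by
      have e : (∑ i : Fin m, l i.castSucc) - (m:ℤ) = ∑ i : Fin m, (l i.castSucc - 1) := by
        rw [Finset.sum_sub_distrib]; simp
      rw [e, ← Finset.sum_add_distrib]
      apply Finset.sum_congr rfl; intros; push_cast; ring
    have hsum : (∑ j : Fin (m+1), l j)
        = (∑ i : Fin m, l i.castSucc) + l (Fin.last m) := Fin.sum_univ_castSucc _
    rw [hsum] at *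
    push_cast at h1 ⊢
    linarith [h1]
  exact key

/-- The diagonal `ℤ_N`-action `σ(Λ′,Λ″,Λ) = (σ₁Λ′, σ₁Λ″, σ₁Λ)` preserves the
exponent set of the diagonal coset
`SU(N)_{m′} × SU(N)_{m″} / SU(N)_{m′+m″}`: if
`τ(Λ′) + τ(Λ″) − τ(Λ) ≡ 0 (mod N)` then
`τ(σ₁Λ′) + τ(σ₁Λ″) − τ(σ₁Λ) ≡ 0 (mod N)`. -/
theorem sigma_preserves_exp (N m' m'' : ℕ) (hN : 2 ≤ N)
    (hm' : 0 < m') (hm'' : 0 < m'')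
    (Λ' Λ'' Λ : Fin (N - 1) → ℤ)
    (hΛ' : Λ' ∈ Ppp N (m' + N)) (hΛ'' : Λ'' ∈ Ppp N (m'' + N))
    (hΛ : Λ ∈ Ppp N (m' + m'' + N))
    (hexp : color N Λ' + color N Λ'' - color N Λ ≡ 0 [ZMOD N]) :
    color N (sigma1 N (m' + N) Λ') + color N (sigma1 N (m'' + N) Λ'')
      - color N (sigma1 N (m' + m'' + N) Λ) ≡ 0 [ZMOD N] := by
  obtain ⟨m, rfl⟩ : ∃ m, N = m + 2 := ⟨N - 2, by omega⟩
  rw [color_sigma1 m (m' + (m + 2)) Λ', color_sigma1 m (m'' + (m + 2)) Λ'',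
    color_sigma1 m (m' + m'' + (m + 2)) Λ]
  refine Int.ModEq.trans ?_ hexp
  rw [Int.modEq_iff_dvd]
  exact ⟨Λ' (Fin.last m) + Λ'' (Fin.last m) - Λ (Fin.last m) - 1, by push_cast; ring⟩
end

section
/- Suppose N is prime. If λ ∈ P_{++}^{(h)} satisfies σ₁^s(λ) = λ for some integer s with 1 ≤ s ≤ N−1, then N divides h and λ = (h/N, …, h/N). Consequently, when N is prime every σ₁-orbit on P_{++}^{(h)} has size 1 or N, and if N does not divide h the action of σ₁ on P_{++}^{(h)} is free. -/
lemma sigma1_def (m h : ℕ) (l : Fin (m+1) → ℤ) (i : Fin (m+1)) :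
    sigma1 (m+2) h l i =
      if (i : ℕ) = 0 then (h : ℤ) - ∑ j : Fin (m+1), l j
      else l ⟨(i : ℕ) - 1, by omega⟩ := rfl

/-- The extended weight: `E l = (l₁, …, l_{m+1}, h - Σ l)` indexed by `ZMod (m+2)`. -/
def Ee (m h : ℕ) (l : Fin (m+1) → ℤ) : ZMod (m+2) → ℤ :=
  fun j => if hj : j.val < m + 1 then l ⟨j.val, hj⟩ else (h : ℤ) - ∑ i, l i

lemma sum_sigma1 (m h : ℕ) (l : Fin (m+1) → ℤ) :
    ∑ i : Fin (m+1), sigma1 (m+2) h l i = (h : ℤ) - l (Fin.last m) := by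
  rw [Fin.sum_univ_succ (f := fun i : Fin (m+1) => sigma1 (m+2) h l i)]
  have h0 : sigma1 (m+2) h l (0 : Fin (m+1)) = (h:ℤ) - ∑ j : Fin (m+1), l j := rfl
  have h2 : ∀ x : Fin m, sigma1 (m+2) h l (Fin.succ x) = l x.castSucc := fun x => rfl
  rw [h0, Finset.sum_congr rfl (fun x _ => h2 x), Fin.sum_univ_castSucc (f := l)]
  ring

lemma Ee_sigma1 (m h : ℕ) (l : Fin (m+1) → ℤ) (j : ZMod (m+2)) :
    Ee m h (sigma1 (m+2) h l) j = Ee m h l (j - 1) := by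
  have hjlt : j.val < m + 2 := ZMod.val_lt j
  by_cases h1 : j.val < m + 1
  · rw [show Ee m h (sigma1 (m+2) h l) j = sigma1 (m+2) h l ⟨j.val, h1⟩ from dif_pos h1,
      sigma1_def]
    by_cases h0 : j.val = 0
    · have hj0 : j = 0 := by
        have := ZMod.val_cast_of_lt (show (0:ℕ) < m + 2 by omega)
        rwa [ZMod.val_eq_zero] at h0
      rw [if_pos h0, hj0, zero_sub]
      have : ((-1 : ZMod (m+2)).val) = m + 1 := ZMod.val_neg_one (m+1)
      rw [show Ee m h l (-1) = (h:ℤ) - ∑ i, l i from dif_neg (by omega)]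
    · rw [if_neg h0]
      have hcast : j - 1 = ((j.val - 1 : ℕ) : ZMod (m+2)) := by
        conv_lhs => rw [← ZMod.natCast_rightInverse j]
        rw [← Nat.cast_one, ← Nat.cast_sub (by omega)]
      have hval : (j - 1).val = j.val - 1 := by
        rw [hcast, ZMod.val_natCast_of_lt (by omega)]
      rw [show Ee m h l (j-1) = l ⟨(j-1).val, by omega⟩ from dif_pos (by omega)]
      congr 1
      ext
      simp [hval]
  · have hjv : j.val = m + 1 := by omega
    rw [show Ee m h (sigma1 (m+2) h l) j = (h:ℤ) - ∑ i : Fin (m+1), sigma1 (m+2) h l i from dif_neg h1,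
      sum_sigma1]
    have hcast : j - 1 = ((m : ℕ) : ZMod (m+2)) := by
      conv_lhs => rw [← ZMod.natCast_rightInverse j]
      rw [hjv]
      push_cast
      ring
    have hval : (j - 1).val = m := by rw [hcast, ZMod.val_natCast_of_lt (by omega)]
    rw [show Ee m h l (j-1) = l ⟨(j-1).val, by omega⟩ from dif_pos (by omega)]
    have : (⟨(j-1).val, by omega⟩ : Fin (m+1)) = Fin.last m := by
      ext; simp [hval, Fin.last]
    rw [this]
    ring

lemma Ee_iter (m h : ℕ) (l : Fin (m+1) → ℤ) (s : ℕ) (j : ZMod (m+2)) :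
    Ee m h ((sigma1 (m+2) h)^[s] l) j = Ee m h l (j - s) := by
  induction s generalizing j with
  | zero => simp
  | succ s ih =>
    rw [Function.iterate_succ_apply', Ee_sigma1, ih]
    congr 1
    push_cast
    ring

lemma main_lemma (m h : ℕ) (hN : (m+2).Prime) (l : Fin (m+1) → ℤ) (s : ℕ)
    (hs1 : 1 ≤ s) (hs2 : s ≤ m + 1) (hfix : (sigma1 (m+2) h)^[s] l = l) :
    (m+2) ∣ h ∧ l = fun _ => (h : ℤ) / ((m+2 : ℕ) : ℤ) := by
  haveI : Fact (m+2).Prime := ⟨hN⟩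
  have inv : ∀ j : ZMod (m+2), Ee m h l (j - s) = Ee m h l j := by
    intro j
    conv_rhs => rw [← hfix]
    rw [Ee_iter]
  have invk : ∀ k : ℕ, ∀ j : ZMod (m+2), Ee m h l (j - k * s) = Ee m h l j := by
    intro k
    induction k with
    | zero => simp
    | succ k ih =>
      intro j
      have : j - ((k+1 : ℕ) : ZMod (m+2)) * s = (j - k * s) - s := by push_cast; ring
      rw [this, inv, ih]
  have su : ((s : ZMod (m+2))) ≠ 0 := by
    rw [Ne, ZMod.natCast_eq_zero_iff]
    intro hd
    exact absurd (Nat.le_of_dvd (by omega) hd) (by omega)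
  have hconst : ∀ j : ZMod (m+2), Ee m h l j = Ee m h l 0 := by
    intro j
    set k := (j * (s : ZMod (m+2))⁻¹).val with hk
    have hks : (k : ZMod (m+2)) * s = j := by
      rw [hk, ZMod.natCast_rightInverse _, mul_assoc, inv_mul_cancel₀ su, mul_one]
    have := invk k j
    rw [hks, sub_self] at this
    exact this.symm
  set c := Ee m h l 0 with hc
  have hl : ∀ i : Fin (m+1), l i = c := by
    intro i
    have hv : (((i : ℕ) : ZMod (m+2))).val = (i : ℕ) :=
      ZMod.val_natCast_of_lt (by omega)
    have := hconst ((i : ℕ) : ZMod (m+2))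
    rw [show Ee m h l ((i : ℕ) : ZMod (m+2)) = l ⟨(((i:ℕ) : ZMod (m+2))).val, by omega⟩
      from dif_pos (by omega)] at this
    rw [← this]
    congr 1
    ext
    simp [hv]
  have hlast : (h : ℤ) - ∑ i, l i = c := by
    have hv : ((((m+1 : ℕ)) : ZMod (m+2))).val = m + 1 :=
      ZMod.val_natCast_of_lt (by omega)
    have := hconst (((m+1 : ℕ)) : ZMod (m+2))
    rwa [show Ee m h (l) (((m+1 : ℕ)) : ZMod (m+2)) = (h:ℤ) - ∑ i, l i
      from dif_neg (by omega)] at this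
  have hsum : ∑ i, l i = (m + 1 : ℤ) * c := by
    rw [Finset.sum_congr rfl (fun i _ => hl i), Finset.sum_const]
    simp [mul_comm]
  have hNc : (h : ℤ) = ((m+2 : ℕ) : ℤ) * c := by
    rw [hsum] at hlast
    push_cast
    linarith
  constructor
  · have : ((m+2 : ℕ) : ℤ) ∣ ((h : ℕ) : ℤ) := ⟨c, hNc⟩
    exact_mod_cast this
  · funext i
    rw [hl i, hNc, Int.mul_ediv_cancel_left _ (by positivity)]

lemma const_fixed (m h : ℕ) (hdvd : (m+2) ∣ h) :
    sigma1 (m+2) h (fun _ : Fin (m+1) => (h : ℤ) / ((m+2 : ℕ) : ℤ)) =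
      fun _ => (h : ℤ) / ((m+2 : ℕ) : ℤ) := by
  obtain ⟨c, rfl⟩ := hdvd
  have hdiv : (((m+2) * c : ℕ) : ℤ) / ((m+2 : ℕ) : ℤ) = (c : ℤ) := by
    push_cast
    rw [Int.mul_ediv_cancel_left _ (by positivity)]
  funext i
  rw [sigma1_def]
  split
  · rw [Finset.sum_const]
    simp only [Finset.card_univ, Fintype.card_fin, hdiv]
    push_cast
    ring
  · rfl

/-- If `N` is prime and `σ₁^s(λ) = λ` for some `1 ≤ s ≤ N-1` and
`λ ∈ P_{++}^{(h)}`, then `N ∣ h` and `λ = (h/N, …, h/N)`.  Consequently every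
`σ₁`-orbit on `P_{++}^{(h)}` has size `1` or `N`, and if `N ∤ h` the action of
`σ₁` on `P_{++}^{(h)}` is free. -/
theorem sigma1_prime_orbits (N h : ℕ) (hN : N.Prime) (hh : N < h) :
    (∀ l ∈ Ppp N h, ∀ s : ℕ, 1 ≤ s → s ≤ N - 1 → (sigma1 N h)^[s] l = l →
        N ∣ h ∧ l = fun _ => (h : ℤ) / (N : ℤ)) ∧
    (∀ l ∈ Ppp N h,
        sigma1 N h l = l ∨ ∀ s : ℕ, 1 ≤ s → s < N → (sigma1 N h)^[s] l ≠ l) ∧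
    (¬ N ∣ h → ∀ l ∈ Ppp N h, ∀ s : ℕ, 1 ≤ s → s ≤ N - 1 →
        (sigma1 N h)^[s] l ≠ l) := by
  obtain ⟨m, rfl⟩ : ∃ m, N = m + 2 := ⟨N - 2, by have := hN.two_le; omega⟩
  have part1 : ∀ l : Fin (m+1) → ℤ, ∀ s : ℕ, 1 ≤ s → s ≤ m + 2 - 1 →
      (sigma1 (m+2) h)^[s] l = l →
      (m+2) ∣ h ∧ l = fun _ => (h : ℤ) / ((m+2 : ℕ) : ℤ) := by
    intro l s hs1 hs2 hfix
    exact main_lemma m h hN l s hs1 (by omega) hfix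
  refine ⟨fun l _ s hs1 hs2 hfix => part1 l s hs1 hs2 hfix, ?_, ?_⟩
  · intro l _
    by_cases hfix : sigma1 (m+2) h l = l
    · exact Or.inl hfix
    · refine Or.inr fun s hs1 hs2 hfixs => hfix ?_
      obtain ⟨hdvd, hl⟩ := part1 l s hs1 (by omega) hfixs
      rw [hl]
      exact const_fixed m h hdvd
  · intro hndvd l _ s hs1 hs2 hfix
    exact hndvd (part1 l s hs1 hs2 hfix).1
end

section
/- Let N ≥ 2 and let m′, m″ be positive integers such that N divides h′ := m′+N and N divides h″ := m″+N (hence N divides h := m′+m″+N). Define Δ(x) := (N²−1)(x²−N²)/(24Nx) and Δ_F := Δ(h′) + Δ(h″) − Δ(h). Then Δ_F = (1/24)(C_G − C_H), where C_G = (N²−1)m′/(m′+N) + (N²−1)m″/(m″+N) and C_H = (N²−1)(m′+m″)/(m′+m″+N); consequently exp(2πi·Δ_F)·exp(−2πi·(C_G−C_H)/24) = 1, i.e., the twisted univalence of the fixed point, ω̇_F, equals 1. -/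
open Complex

/-- The conformal dimension `Δ(x) = (N²−1)(x²−N²)/(24Nx)` of the weight with
all shifted labels equal to `x/N`. -/
noncomputable def Dfun (N : ℕ) (x : ℝ) : ℝ :=
  ((N : ℝ) ^ 2 - 1) * (x ^ 2 - (N : ℝ) ^ 2) / (24 * N * x)

/-- The central charge `C_G` of `G = SU(N)_{m′} × SU(N)_{m″}`. -/
noncomputable def CG (N : ℕ) (m' m'' : ℝ) : ℝ :=
  ((N : ℝ) ^ 2 - 1) * m' / (m' + N) + ((N : ℝ) ^ 2 - 1) * m'' / (m'' + N)

/-- The central charge `C_H` of `H = SU(N)_{m′+m″}`. -/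
noncomputable def CH (N : ℕ) (m' m'' : ℝ) : ℝ :=
  ((N : ℝ) ^ 2 - 1) * (m' + m'') / (m' + m'' + N)

/-- For the diagonal coset with `N ∣ h′ = m′+N` and `N ∣ h″ = m″+N`, the conformal
dimension `Δ_F = Δ(h′) + Δ(h″) − Δ(h)` of the unique fixed point equals
`(1/24)(C_G − C_H)`; hence the twisted univalence
`ω̇_F = exp(2πiΔ_F)·exp(−2πi(C_G−C_H)/24)` equals `1`. -/
theorem fixed_point_twisted_univalence (N m' m'' : ℕ) (hN : 2 ≤ N)
    (hm' : 0 < m') (hm'' : 0 < m'')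
    (h1 : N ∣ m' + N) (h2 : N ∣ m'' + N) :
    Dfun N ((m' : ℝ) + N) + Dfun N ((m'' : ℝ) + N) - Dfun N ((m' : ℝ) + m'' + N) =
        (1 / 24) * (CG N m' m'' - CH N m' m'') ∧
      Complex.exp (2 * Real.pi * I *
            (Dfun N ((m' : ℝ) + N) + Dfun N ((m'' : ℝ) + N) -
              Dfun N ((m' : ℝ) + m'' + N))) *
          Complex.exp (-2 * Real.pi * I * (CG N m' m'' - CH N m' m'') / 24) = 1 := by
  have hN0 : (0:ℝ) < N := by positivity
  have hm'0 : (0:ℝ) < m' := by exact_mod_cast hm'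
  have hm''0 : (0:ℝ) < m'' := by exact_mod_cast hm''
  have d1 : ((m':ℝ) + N) ≠ 0 := by positivity
  have d2 : ((m'':ℝ) + N) ≠ 0 := by positivity
  have d3 : ((m':ℝ) + m'' + N) ≠ 0 := by positivity
  have hNe : (N:ℝ) ≠ 0 := ne_of_gt hN0
  have heq : Dfun N ((m' : ℝ) + N) + Dfun N ((m'' : ℝ) + N) - Dfun N ((m' : ℝ) + m'' + N) =
      (1 / 24) * (CG N m' m'' - CH N m' m'') := by
    unfold Dfun CG CH
    field_simp
    ring
  refine ⟨heq, ?_⟩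
  rw [← Complex.exp_add, ← Complex.exp_zero]
  congr 1
  have heqC := congrArg (Complex.ofReal) heq
  push_cast at heqC
  rw [heqC]
  ring
end

section
/- The real number r := 2cos(2π/5) + 2cos(4π/5) + 2cos(6π/5) + 2 equals (1−√5)/2; in particular r < 0, while √(2/10)·sin(25π/10) = 1/√5 > 0. Hence the product r·(1/√5) is strictly negative. -/
open Real

lemma cos_two_pi_div_five' : Real.cos (2 * π / 5) = (Real.sqrt 5 - 1) / 4 := by
  have h : (2 * π / 5) = 2 * (π / 5) := by ring
  rw [h, Real.cos_two_mul, Real.cos_pi_div_five]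
  have h5 : Real.sqrt 5 ^ 2 = 5 := Real.sq_sqrt (by norm_num)
  nlinarith [h5]

lemma cos_four_pi_div_five' : Real.cos (4 * π / 5) = -((1 + Real.sqrt 5) / 4) := by
  have h : (4 * π / 5) = π - π / 5 := by ring
  rw [h, Real.cos_pi_sub, Real.cos_pi_div_five]

lemma cos_six_pi_div_five' : Real.cos (6 * π / 5) = -((1 + Real.sqrt 5) / 4) := by
  have h : (6 * π / 5) = π / 5 + π := by ring
  rw [h, Real.cos_add_pi, Real.cos_pi_div_five]

/-- For the coset `SU(2)_8 ⊂ SU(3)_2`: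
`r = 2cos(2π/5) + 2cos(4π/5) + 2cos(6π/5) + 2 = (1−√5)/2 < 0`, while
`√(2/10)·sin(25π/10) = 1/√5 > 0`, hence `r·(1/√5) < 0`; this shows that the
Kac–Wakimoto Hypothesis fails for this inclusion. -/
theorem kwh_counterexample :
    (2 * Real.cos (2 * π / 5) + 2 * Real.cos (4 * π / 5) +
        2 * Real.cos (6 * π / 5) + 2 = (1 - Real.sqrt 5) / 2) ∧
    (2 * Real.cos (2 * π / 5) + 2 * Real.cos (4 * π / 5) +
        2 * Real.cos (6 * π / 5) + 2 < 0) ∧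
    (Real.sqrt (2 / 10) * Real.sin (25 * π / 10) = 1 / Real.sqrt 5) ∧
    (0 < 1 / Real.sqrt 5) ∧
    ((2 * Real.cos (2 * π / 5) + 2 * Real.cos (4 * π / 5) +
        2 * Real.cos (6 * π / 5) + 2) * (1 / Real.sqrt 5) < 0) := by
  have h5 : (2:ℝ) < Real.sqrt 5 := by
    have : (2:ℝ) = Real.sqrt 4 := by
      rw [show (4:ℝ) = 2^2 by norm_num, Real.sqrt_sq]; norm_num
    rw [this]
    exact Real.sqrt_lt_sqrt (by norm_num) (by norm_num)
  have hr : 2 * Real.cos (2 * π / 5) + 2 * Real.cos (4 * π / 5) +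
      2 * Real.cos (6 * π / 5) + 2 = (1 - Real.sqrt 5) / 2 := by
    rw [cos_two_pi_div_five', cos_four_pi_div_five', cos_six_pi_div_five']; ring
  have hrneg : 2 * Real.cos (2 * π / 5) + 2 * Real.cos (4 * π / 5) +
      2 * Real.cos (6 * π / 5) + 2 < 0 := by rw [hr]; linarith
  have hsin : Real.sin (25 * π / 10) = 1 := by
    have h : (25 * π / 10) = π / 2 + 2 * π := by ring
    rw [h, Real.sin_add_two_pi, Real.sin_pi_div_two]
  have hs : Real.sqrt (2 / 10) * Real.sin (25 * π / 10) = 1 / Real.sqrt 5 := by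
    rw [hsin, mul_one, show (2:ℝ)/10 = 1/5 by norm_num, Real.sqrt_div' 1 (by norm_num)]
    simp [Real.sqrt_one]
  have hpos : (0:ℝ) < 1 / Real.sqrt 5 := by positivity
  exact ⟨hr, hrneg, hs, hpos, mul_neg_of_neg_of_pos hrneg hpos⟩
end
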